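/- For every integer N ≥ 3, the half sequence (λ_k)_{1 ≤ k ≤ ⌊N/2⌋}, where λ_k = -(1/4) ∑_{j=1}^{N-1} (1 - cos(2πjk/N)) / sin^3(πj/N), is negative and strictly decreasing in k. -/

import Mathlib

open Finset

noncomputable def Sg (θ : ℝ) (n : ℕ) : ℝ := ∑ i ∈ Icc 1 n, Real.sin (i * θ)
noncomputable def Ta (θ : ℝ) (n : ℕ) : ℝ := ∑ i ∈ Icc 1 n, Sg θ i

lemma two_sin_mul_cos (x y : ℝ) :
    2 * Real.sin y * Real.cos x = Real.sin (x + y) - Real.sin (x - y) := by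
  rw [Real.sin_add, Real.sin_sub]; ring

lemma abel_sum (c f : ℕ → ℝ) (n : ℕ) :
    ∑ j ∈ Icc 1 (n+1), c j * f j
      = ∑ j ∈ Icc 1 n, (c j - c (j+1)) * (∑ i ∈ Icc 1 j, f i)
        + c (n+1) * ∑ i ∈ Icc 1 (n+1), f i := by
  induction n with
  | zero => simp
  | succ n ih =>
      rw [Finset.sum_Icc_succ_top (by omega : 1 ≤ n+1+1), ih,
          Finset.sum_Icc_succ_top (by omega : 1 ≤ n+1)
            (f := fun j => (c j - c (j+1)) * (∑ i ∈ Icc 1 j, f i)),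
          Finset.sum_Icc_succ_top (by omega : 1 ≤ n+1+1) (f := f)]
      ring

lemma sg_formula (θ : ℝ) (n : ℕ) :
    2 * Real.sin (θ/2) * Sg θ n = Real.cos (θ/2) - Real.cos (((n:ℝ) + 1/2) * θ) := by
  induction n with
  | zero =>
      have h : (2:ℝ)⁻¹ * θ = θ/2 := by ring
      simp [Sg, h]
  | succ n ih =>
      have hstep : Sg θ (n+1) = Sg θ n + Real.sin ((n+1 : ℕ) * θ) := by
        simp [Sg, Finset.sum_Icc_succ_top (by omega : 1 ≤ n+1)]
      have hps : 2 * Real.sin (((n:ℝ)+1) * θ) * Real.sin (θ/2)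
          = Real.cos (((n:ℝ) + 1/2) * θ) - Real.cos (((n:ℝ) + 1 + 1/2) * θ) := by
        have := Real.two_mul_sin_mul_sin (((n:ℝ)+1) * θ) (θ/2)
        have h1 : ((n:ℝ)+1) * θ - θ/2 = ((n:ℝ) + 1/2) * θ := by ring
        have h2 : ((n:ℝ)+1) * θ + θ/2 = ((n:ℝ) + 1 + 1/2) * θ := by ring
        rw [h1, h2] at this
        linarith
      rw [hstep]
      push_cast
      push_cast at ih
      nlinarith [ih, hps]

lemma ta_formula (θ : ℝ) (n : ℕ) :
    4 * Real.sin (θ/2)^2 * Ta θ n = ((n:ℝ)+1) * Real.sin θ - Real.sin (((n:ℝ)+1) * θ) := by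
  induction n with
  | zero => simp [Ta]
  | succ n ih =>
      have hstep : Ta θ (n+1) = Ta θ n + Sg θ (n+1) := by
        simp [Ta, Finset.sum_Icc_succ_top (by omega : 1 ≤ n+1)]
      have hsg := sg_formula θ (n+1)
      have hsc : 2 * Real.sin (θ/2) * Real.cos (((n:ℝ)+1+1/2) * θ)
          = Real.sin (((n:ℝ)+1+1) * θ) - Real.sin (((n:ℝ)+1) * θ) := by
        have := two_sin_mul_cos (((n:ℝ)+1+1/2) * θ) (θ/2)
        have h1 : ((n:ℝ)+1+1/2) * θ + θ/2 = ((n:ℝ)+1+1) * θ := by ring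
        have h2 : ((n:ℝ)+1+1/2) * θ - θ/2 = ((n:ℝ)+1) * θ := by ring
        rw [h1, h2] at this
        linarith
      have hs2 : Real.sin θ = 2 * Real.sin (θ/2) * Real.cos (θ/2) := by
        have := Real.sin_two_mul (θ/2)
        have h : 2 * (θ/2) = θ := by ring
        rw [h] at this; linarith
      rw [hstep]
      push_cast
      push_cast at ih hsg
      linear_combination ih + (2*Real.sin (θ/2))*hsg - hs2 - hsc

lemma abs_sin_nat_mul (x : ℝ) (hx : 0 ≤ Real.sin x) : ∀ n : ℕ, |Real.sin (n * x)| ≤ n * Real.sin x := by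
  intro n
  induction n with
  | zero => simp
  | succ n ih =>
      have h1 : ((n:ℝ)+1) * x = n * x + x := by ring
      push_cast
      rw [h1, Real.sin_add]
      have ha := abs_add_le (Real.sin (n*x) * Real.cos x) (Real.cos (n*x) * Real.sin x)
      rw [abs_mul, abs_mul] at ha
      have hc1 := Real.abs_cos_le_one x
      have hc2 := Real.abs_cos_le_one ((n:ℝ)*x)
      have hsx : |Real.sin x| = Real.sin x := abs_of_nonneg hx
      have hn0 : (0:ℝ) ≤ |Real.sin ((n:ℝ)*x)| := abs_nonneg _
      nlinarith [ih]

lemma ta_nonneg (θ : ℝ) (h1 : 0 < θ) (h2 : θ < Real.pi) (n : ℕ) : 0 ≤ Ta θ n := by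
  have hs2 : 0 < Real.sin (θ/2) :=
    Real.sin_pos_of_pos_of_lt_pi (by linarith) (by linarith [Real.pi_pos])
  have hs : 0 ≤ Real.sin θ := le_of_lt (Real.sin_pos_of_pos_of_lt_pi h1 h2)
  have habs := abs_sin_nat_mul θ hs (n+1)
  push_cast at habs
  have h3 : Real.sin (((n:ℝ)+1) * θ) ≤ ((n:ℝ)+1) * Real.sin θ :=
    le_trans (le_abs_self _) habs
  have hf := ta_formula θ n
  nlinarith [mul_pos hs2 hs2]

lemma csc_sq_convex (a b : ℝ) (ha1 : 0 < a) (ha2 : a < Real.pi) (hb1 : 0 < b) (hb2 : b < Real.pi) :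
    2 * (1 / (4 * Real.sin ((a+b)/2) ^ 2)) ≤ 1 / (4 * Real.sin a ^ 2) + 1 / (4 * Real.sin b ^ 2) := by
  have hsa : 0 < Real.sin a := Real.sin_pos_of_pos_of_lt_pi ha1 ha2
  have hsb : 0 < Real.sin b := Real.sin_pos_of_pos_of_lt_pi hb1 hb2
  have hsm : 0 < Real.sin ((a+b)/2) :=
    Real.sin_pos_of_pos_of_lt_pi (by linarith) (by linarith)
  have hprod : Real.sin a * Real.sin b ≤ Real.sin ((a+b)/2) ^ 2 := by
    have h1 := Real.two_mul_sin_mul_sin a b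
    have h2 : Real.cos (a + b) = 1 - 2 * Real.sin ((a+b)/2) ^ 2 := by
      have := Real.cos_two_mul' ((a+b)/2)
      have h : 2 * ((a+b)/2) = a + b := by ring
      rw [h] at this
      nlinarith [Real.sin_sq_add_cos_sq ((a+b)/2)]
    nlinarith [Real.cos_le_one (a - b)]
  rw [← sub_nonneg]
  have key : 1 / (4 * Real.sin a ^ 2) + 1 / (4 * Real.sin b ^ 2) - 2 * (1 / (4 * Real.sin ((a+b)/2) ^ 2))
      = (Real.sin ((a+b)/2)^2 * (Real.sin a ^2 + Real.sin b ^2) - 2 * Real.sin a ^2 * Real.sin b ^2)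
        / (4 * Real.sin a ^2 * Real.sin b ^2 * Real.sin ((a+b)/2)^2) := by
    field_simp
    ring
  rw [key]
  apply div_nonneg _ (by positivity)
  nlinarith [sq_nonneg (Real.sin a - Real.sin b), mul_pos hsa hsb]

lemma key_lower (θ : ℝ) (h1 : 0 < θ) (h2 : θ < Real.pi) (c : ℕ → ℝ) (n : ℕ)
    (hconv : ∀ j, 1 ≤ j → j + 2 ≤ n + 1 → 2 * c (j+1) ≤ c j + c (j+2))
    (hdec : c (n+1) ≤ c n ∨ n = 0) :
    c (n+1) * Sg θ (n+1) ≤ ∑ j ∈ Icc 1 (n+1), c j * Real.sin (j * θ) := by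
  rw [abel_sum c (fun i => Real.sin (i * θ)) n]
  have hmain : 0 ≤ ∑ j ∈ Icc 1 n, (c j - c (j+1)) * (∑ i ∈ Icc 1 j, Real.sin ((i:ℝ) * θ)) := by
    rcases n with _ | n'
    · simp
    · have habel : (∑ j ∈ Icc 1 (n'+1), (c j - c (j+1)) * (∑ i ∈ Icc 1 j, Real.sin ((i:ℝ) * θ)))
          = ∑ j ∈ Icc 1 n', ((c j - c (j+1)) - (c (j+1) - c (j+1+1))) * Ta θ j
            + (c (n'+1) - c (n'+1+1)) * Ta θ (n'+1) :=
        abel_sum (fun j => c j - c (j+1)) (Sg θ) n'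
      rw [habel]
      apply add_nonneg
      · apply Finset.sum_nonneg
        intro j hj
        simp only [Finset.mem_Icc] at hj
        apply mul_nonneg
        · have := hconv j hj.1 (by omega)
          linarith
        · exact ta_nonneg θ h1 h2 j
      · apply mul_nonneg
        · rcases hdec with hd | hd
          · linarith
          · omega
        · exact ta_nonneg θ h1 h2 (n'+1)
  exact le_add_of_nonneg_left hmain

lemma sin_angle_pos (N j : ℕ) (hj1 : 1 ≤ j) (hj2 : j ≤ N - 1) (hN : 3 ≤ N) :
    0 < Real.sin (Real.pi * j / N) := by
  have hN0 : (0:ℝ) < N := by exact_mod_cast (by omega : 0 < N)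
  apply Real.sin_pos_of_pos_of_lt_pi
  · apply div_pos _ hN0
    have : (0:ℝ) < j := by exact_mod_cast hj1
    positivity
  · rw [div_lt_iff₀ hN0]
    have hjN : (j:ℝ) < N := by exact_mod_cast (by omega : j < N)
    nlinarith [Real.pi_pos]

lemma cos_lt_one_of (x : ℝ) (h1 : 0 < x) (h2 : x < 2*Real.pi) : Real.cos x < 1 := by
  have hs : 0 < Real.sin (x/2) :=
    Real.sin_pos_of_pos_of_lt_pi (by linarith) (by linarith)
  have hc : Real.cos x = 1 - 2 * Real.sin (x/2)^2 := by
    have h := Real.cos_two_mul' (x/2)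
    have hh : 2*(x/2) = x := by ring
    rw [hh] at h
    nlinarith [Real.sin_sq_add_cos_sq (x/2)]
  nlinarith

noncomputable def thetaNk (N k : ℕ) : ℝ := (2*(k:ℝ)+1) * Real.pi / N

noncomputable def cc (N : ℕ) : ℕ → ℝ := fun j => 1/(4 * Real.sin (Real.pi * j / N)^2)

lemma theta_pos (N k : ℕ) (hN : 3 ≤ N) : 0 < thetaNk N k := by
  have hN0 : (0:ℝ) < N := by exact_mod_cast (by omega : 0 < N)
  rw [thetaNk]
  apply div_pos _ hN0
  positivity

lemma theta_lt_pi (N k : ℕ) (hN : 3 ≤ N) (hm : 2*k+1 < N) : thetaNk N k < Real.pi := by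
  have hN0 : (0:ℝ) < N := by exact_mod_cast (by omega : 0 < N)
  rw [thetaNk, div_lt_iff₀ hN0]
  have : (2*(k:ℝ)+1) < N := by exact_mod_cast hm
  nlinarith [Real.pi_pos]

lemma cc_conv (N : ℕ) (hN : 3 ≤ N) : ∀ j, 1 ≤ j → j + 2 ≤ N - 1 →
    2 * cc N (j+1) ≤ cc N j + cc N (j+2) := by
  intro j hj1 hj2
  have hN0 : (0:ℝ) < N := by exact_mod_cast (by omega : 0 < N)
  have hjr : (0:ℝ) < j := by exact_mod_cast hj1
  have hjr2 : ((j:ℝ)) + 2 < (N:ℝ) := by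
    have h : (j + 2 : ℕ) < N := by omega
    exact_mod_cast h
  have h1 := csc_sq_convex (Real.pi * j / N) (Real.pi * ((j+2:ℕ):ℝ) / N)
    (by apply div_pos _ hN0; positivity)
    (by rw [div_lt_iff₀ hN0]; nlinarith [Real.pi_pos])
    (by apply div_pos _ hN0; push_cast; positivity)
    (by rw [div_lt_iff₀ hN0]; push_cast; nlinarith [Real.pi_pos])
  have hmid : (Real.pi * j / N + Real.pi * ((j+2:ℕ):ℝ) / N) / 2
      = Real.pi * ((j+1:ℕ):ℝ) / N := by
    push_cast; ring
  rw [hmid] at h1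
  simp only [cc]
  exact h1

lemma cc_dec (N : ℕ) (hN : 3 ≤ N) : ∀ i : ℕ, 1 ≤ i → 2*(i+1) ≤ N → cc N (i+1) ≤ cc N i := by
  intro i hi1 hi2
  have hN0 : (0:ℝ) < N := by exact_mod_cast (by omega : 0 < N)
  have hir : (0:ℝ) < i := by exact_mod_cast hi1
  have ha1 : 0 < Real.pi * i / N := by
    apply div_pos _ hN0; positivity
  have h2i : 2*((i:ℝ)+1) ≤ (N:ℝ) := by exact_mod_cast hi2
  have hb2 : Real.pi * ((i+1:ℕ):ℝ) / N ≤ Real.pi/2 := by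
    rw [div_le_iff₀ hN0]
    push_cast
    nlinarith [Real.pi_pos]
  have hab : Real.pi * (i:ℝ) / N ≤ Real.pi * ((i+1:ℕ):ℝ) / N := by
    rw [div_le_div_iff₀ hN0 hN0]
    push_cast
    nlinarith [Real.pi_pos]
  have hmono : Real.sin (Real.pi * i / N) ≤ Real.sin (Real.pi * ((i+1:ℕ):ℝ) / N) := by
    apply Real.strictMonoOn_sin.monotoneOn
    · exact ⟨by nlinarith [Real.pi_pos], by linarith⟩
    · exact ⟨by nlinarith [Real.pi_pos], hb2⟩
    · exact hab
  have hsi : 0 < Real.sin (Real.pi * i / N) :=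
    Real.sin_pos_of_pos_of_lt_pi ha1 (by nlinarith [Real.pi_pos])
  simp only [cc]
  apply one_div_le_one_div_of_le (by positivity)
  nlinarith [hmono, hsi]

lemma cc_sym_term (N k j : ℕ) (hN : 3 ≤ N) (hj1 : 1 ≤ j) (hj2 : j ≤ N - 1) :
    cc N (N - j) * Real.sin (((N - j : ℕ):ℝ) * thetaNk N k)
      = cc N j * Real.sin ((j:ℝ) * thetaNk N k) := by
  have hN0 : (0:ℝ) < N := by exact_mod_cast (by omega : 0 < N)
  have hjN : j ≤ N := by omega
  have hcast : ((N - j : ℕ) : ℝ) = (N:ℝ) - j := by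
    push_cast [Nat.cast_sub hjN]; ring
  have hsin1 : Real.sin (Real.pi * ((N - j : ℕ):ℝ) / N) = Real.sin (Real.pi * j / N) := by
    rw [hcast]
    have ha : Real.pi * ((N:ℝ) - j) / N = Real.pi - Real.pi * j / N := by
      field_simp
    rw [ha, Real.sin_pi_sub]
  have hsin2 : Real.sin (((N - j : ℕ):ℝ) * thetaNk N k) = Real.sin ((j:ℝ) * thetaNk N k) := by
    rw [hcast]
    have ha : ((N:ℝ) - j) * thetaNk N k
        = ((2*(k:ℝ)+1) * Real.pi - (j:ℝ) * thetaNk N k) := by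
      rw [thetaNk]; field_simp
    rw [ha, Real.sin_sub]
    have hz : Real.sin ((2*(k:ℝ)+1) * Real.pi) = 0 := by
      have h := Real.sin_nat_mul_pi (2*k+1)
      push_cast at h
      convert h using 2
      all_goals ring
    have ho : Real.cos ((2*(k:ℝ)+1) * Real.pi) = -1 := by
      have h1 : (2*(k:ℝ)+1) * Real.pi = (k:ℝ) * (2*Real.pi) + Real.pi := by ring
      rw [h1, Real.cos_add]
      have h2 : Real.cos ((k:ℝ) * (2*Real.pi)) = 1 := by
        exact_mod_cast Real.cos_nat_mul_two_pi k
      have h3 : Real.sin ((k:ℝ) * (2*Real.pi)) = 0 := by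
        have h := Real.sin_nat_mul_pi (2*k)
        push_cast at h
        convert h using 2
        all_goals ring
      rw [h2, h3]
      simp [Real.cos_pi]
    rw [hz, ho]
    ring
  simp only [cc]
  rw [hsin1, hsin2]

lemma cos_nat_pi_even (t : ℕ) : Real.cos (((t+t:ℕ):ℝ)*Real.pi) = 1 := by
  have h1 : ((t+t:ℕ):ℝ)*Real.pi = (t:ℝ)*(2*Real.pi) := by push_cast; ring
  rw [h1]
  exact_mod_cast Real.cos_nat_mul_two_pi t

lemma cos_nat_pi_odd (t : ℕ) : Real.cos (((2*t+1:ℕ):ℝ)*Real.pi) = -1 := by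
  have h1 : ((2*t+1:ℕ):ℝ)*Real.pi = (t:ℝ)*(2*Real.pi) + Real.pi := by push_cast; ring
  rw [h1, Real.cos_add]
  have h2 : Real.cos ((t:ℝ)*(2*Real.pi)) = 1 := by
    exact_mod_cast Real.cos_nat_mul_two_pi t
  have h3 : Real.sin ((t:ℝ)*(2*Real.pi)) = 0 := by
    have h := Real.sin_nat_mul_pi (2*t)
    push_cast at h
    convert h using 2
    all_goals ring
  rw [h2, h3]
  simp [Real.cos_pi]

set_option maxHeartbeats 1000000 in
lemma G_pos (N k : ℕ) (hN : 3 ≤ N) (hNeven : N % 2 = 0) (hk1 : 1 ≤ k) (hkeven : k % 2 = 0)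
    (h2k : 2*(k+1) ≤ N) :
    0 < Real.cos (thetaNk N k/2)
      - Real.sin (thetaNk N k/2) * (1 - Real.cos (Real.pi/(N:ℝ))^2) := by
  have hN0 : (0:ℝ) < N := by exact_mod_cast (by omega : 0 < N)
  have hN3 : (3:ℝ) ≤ N := by exact_mod_cast hN
  have hθ1 : 0 < thetaNk N k := theta_pos N k hN
  have hθ2 : thetaNk N k < Real.pi := theta_lt_pi N k hN (by omega)
  have hsa : 0 < Real.sin (thetaNk N k/2) :=
    Real.sin_pos_of_pos_of_lt_pi (by linarith) (by linarith [Real.pi_pos])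
  rcases le_or_gt 8 N with h8 | h8
  · -- generic large case
    have hs0 : 0 < Real.sin (Real.pi/(2*(N:ℝ))) := by
      apply Real.sin_pos_of_pos_of_lt_pi (by positivity)
      rw [div_lt_iff₀ (by positivity)]
      nlinarith [Real.pi_pos]
    have hmN : 2*k+1 ≤ N - 1 := by omega
    have hcaub : Real.sin (Real.pi/(2*(N:ℝ))) ≤ Real.cos (thetaNk N k/2) := by
      have hm2 : (2*(k:ℝ)+1) ≤ (N:ℝ) - 1 := by
        have hc : ((2*k+1:ℕ):ℝ) ≤ ((N-1:ℕ):ℝ) := by exact_mod_cast hmN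
        push_cast [Nat.cast_sub (by omega : 1 ≤ N)] at hc
        linarith
      have hθub : thetaNk N k/2 ≤ Real.pi/2 - Real.pi/(2*(N:ℝ)) := by
        have heq : Real.pi/2 - Real.pi/(2*(N:ℝ)) - thetaNk N k/2
            = ((N:ℝ) - 1 - (2*(k:ℝ)+1)) * Real.pi/(2*(N:ℝ)) := by
          rw [thetaNk]; field_simp
        have hpos : 0 ≤ ((N:ℝ) - 1 - (2*(k:ℝ)+1)) * Real.pi/(2*(N:ℝ)) := by
          apply div_nonneg _ (by positivity)
          apply mul_nonneg _ Real.pi_pos.le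
          linarith
        linarith
      have hd : 0 < Real.pi/(2*(N:ℝ)) := by positivity
      have hcc := Real.cos_le_cos_of_nonneg_of_le_pi (by linarith : (0:ℝ) ≤ thetaNk N k/2)
        (by linarith [Real.pi_pos, hd]) hθub
      rwa [Real.cos_pi_div_two_sub] at hcc
    have hsin2 : Real.sin (Real.pi/(N:ℝ))
        = 2*Real.sin (Real.pi/(2*(N:ℝ)))*Real.cos (Real.pi/(2*(N:ℝ))) := by
      have hh := Real.sin_two_mul (Real.pi/(2*(N:ℝ)))
      rw [show 2*(Real.pi/(2*(N:ℝ))) = Real.pi/(N:ℝ) from by ring] at hh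
      exact hh
    have hslt : Real.sin (Real.pi/(2*(N:ℝ))) < Real.pi/(2*(N:ℝ)) :=
      Real.sin_lt (by positivity)
    have hNb : Real.pi/(2*(N:ℝ)) ≤ Real.pi/16 := by
      apply div_le_div_of_nonneg_left Real.pi_pos.le (by norm_num)
      have : (8:ℝ) ≤ N := by exact_mod_cast h8
      linarith
    have hcc1 : Real.cos (Real.pi/(2*(N:ℝ)))^2 ≤ 1 := by
      nlinarith [Real.sin_sq_add_cos_sq (Real.pi/(2*(N:ℝ))),
        sq_nonneg (Real.sin (Real.pi/(2*(N:ℝ))))]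
    have hπ4 : Real.pi < 4 := by nlinarith [Real.pi_lt_d2]
    have h4s : 4*Real.sin (Real.pi/(2*(N:ℝ)))*Real.cos (Real.pi/(2*(N:ℝ)))^2 < 1 := by
      nlinarith [hslt, hNb, hcc1, hs0, sq_nonneg (Real.cos (Real.pi/(2*(N:ℝ))))]
    have h5 : Real.sin (Real.pi/(N:ℝ))^2 < Real.sin (Real.pi/(2*(N:ℝ))) := by
      rw [hsin2]
      nlinarith [h4s, hs0, sq_nonneg (Real.cos (Real.pi/(2*(N:ℝ))))]
    have h1cp : 1 - Real.cos (Real.pi/(N:ℝ))^2 = Real.sin (Real.pi/(N:ℝ))^2 := by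
      nlinarith [Real.sin_sq_add_cos_sq (Real.pi/(N:ℝ))]
    rw [h1cp]
    have hsa1 : Real.sin (thetaNk N k/2) ≤ 1 := Real.sin_le_one _
    nlinarith [hcaub, h5, sq_nonneg (Real.sin (Real.pi/(N:ℝ))), hsa]
  · -- small case : N = 6, k = 2
    have hN6 : N = 6 := by omega
    have hk2 : k = 2 := by omega
    have hN6r : (N:ℝ) = 6 := by rw [hN6]; norm_num
    have hang : thetaNk N k/2 = Real.pi/4 + Real.pi/6 := by
      rw [thetaNk, hN6r, hk2]; push_cast; ring
    have hcp6 : Real.cos (Real.pi/(N:ℝ))^2 = 3/4 := by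
      rw [hN6r, Real.cos_pi_div_six]
      rw [div_pow, Real.sq_sqrt (by norm_num : (0:ℝ) ≤ 3)]
      norm_num
    rw [hang, hcp6, Real.cos_add, Real.sin_add, Real.cos_pi_div_four,
      Real.sin_pi_div_four, Real.cos_pi_div_six, Real.sin_pi_div_six]
    have s2 : Real.sqrt 2 ^ 2 = 2 := Real.sq_sqrt (by norm_num)
    have s3 : Real.sqrt 3 ^ 2 = 3 := Real.sq_sqrt (by norm_num)
    have p2 : 0 < Real.sqrt 2 := Real.sqrt_pos.mpr (by norm_num)
    have p3 : 0 < Real.sqrt 3 := Real.sqrt_pos.mpr (by norm_num)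
    have h33 : 0 < 3*Real.sqrt 3 - 5 := by nlinarith [s3, p3]
    nlinarith [mul_pos p2 h33]
lemma fold_even (N h : ℕ) (g : ℕ → ℝ) (hh : 2 ≤ h) (hN : N = h + h)
    (hsym : ∀ j, 1 ≤ j → j ≤ N - 1 → g (N - j) = g j) :
    ∑ j ∈ Icc 1 (N-1), g j = 2 * ∑ j ∈ Icc 1 (h-1), g j + g h := by
  have e1 : Icc 1 (N-1) = Ico 1 N := by rw [← Finset.Ico_add_one_right_eq_Icc]; congr 1; omega
  have e2 : Icc 1 (h-1) = Ico 1 h := by rw [← Finset.Ico_add_one_right_eq_Icc]; congr 1; omega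
  rw [e1, e2, ← Finset.sum_Ico_consecutive g (by omega : 1 ≤ h) (by omega : h ≤ N),
      Finset.sum_eq_sum_Ico_succ_bot (by omega : h < N) g]
  have e3 : ∑ j ∈ Ico (h+1) N, g j = ∑ j ∈ Ico 1 h, g j := by
    apply Finset.sum_nbij' (fun j => N - j) (fun j => N - j)
    · intro a ha; simp only [Finset.mem_Ico] at *; omega
    · intro a ha; simp only [Finset.mem_Ico] at *; omega
    · intro a ha; simp only [Finset.mem_Ico] at ha; omega
    · intro a ha; simp only [Finset.mem_Ico] at ha; omega
    · intro a ha; simp only [Finset.mem_Ico] at ha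
      exact (hsym a (by omega) (by omega)).symm
  rw [e3]; ring

lemma fold_odd (N h : ℕ) (g : ℕ → ℝ) (hh : 1 ≤ h) (hN : N = 2*h + 1)
    (hsym : ∀ j, 1 ≤ j → j ≤ N - 1 → g (N - j) = g j) :
    ∑ j ∈ Icc 1 (N-1), g j = 2 * ∑ j ∈ Icc 1 h, g j := by
  have e1 : Icc 1 (N-1) = Ico 1 N := by rw [← Finset.Ico_add_one_right_eq_Icc]; congr 1; omega
  have e2 : Icc 1 h = Ico 1 (h+1) := by rw [← Finset.Ico_add_one_right_eq_Icc]
  rw [e1, e2, ← Finset.sum_Ico_consecutive g (by omega : 1 ≤ h+1) (by omega : h+1 ≤ N)]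
  have e3 : ∑ j ∈ Ico (h+1) N, g j = ∑ j ∈ Ico 1 (h+1), g j := by
    apply Finset.sum_nbij' (fun j => N - j) (fun j => N - j)
    · intro a ha; simp only [Finset.mem_Ico] at *; omega
    · intro a ha; simp only [Finset.mem_Ico] at *; omega
    · intro a ha; simp only [Finset.mem_Ico] at ha; omega
    · intro a ha; simp only [Finset.mem_Ico] at ha; omega
    · intro a ha; simp only [Finset.mem_Ico] at ha
      exact (hsym a (by omega) (by omega)).symm
  rw [e3]; ring

set_option maxHeartbeats 1000000 in
lemma part2odd (N k h : ℕ) (hN : 3 ≤ N) (hNh : N = 2*h + 1) (hk1 : 1 ≤ k)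
    (h2k : 2*(k+1) ≤ N) :
    0 < ∑ j ∈ Icc 1 (N-1), cc N j * Real.sin ((j:ℝ) * thetaNk N k) := by
  have hN0 : (0:ℝ) < N := by exact_mod_cast (by omega : 0 < N)
  have hh2 : 2 ≤ h := by omega
  have hNr : (N:ℝ) = 2*(h:ℝ)+1 := by rw [hNh]; push_cast; ring
  have hθ1 : 0 < thetaNk N k := theta_pos N k hN
  have hθ2 : thetaNk N k < Real.pi := theta_lt_pi N k hN (by omega)
  have hsa : 0 < Real.sin (thetaNk N k/2) :=
    Real.sin_pos_of_pos_of_lt_pi (by linarith) (by linarith [Real.pi_pos])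
  have hca : 0 < Real.cos (thetaNk N k/2) :=
    Real.cos_pos_of_mem_Ioo ⟨by linarith [Real.pi_pos], by linarith⟩
  rw [fold_odd N h _ (by omega) hNh (fun j hj1 hj2 => cc_sym_term N k j hN hj1 hj2)]
  have hdec' : cc N ((h-1)+1) ≤ cc N (h-1) ∨ h - 1 = 0 :=
    Or.inl (cc_dec N hN (h-1) (by omega) (by omega))
  have hkey := key_lower (thetaNk N k) hθ1 hθ2 (cc N) (h-1)
    (fun j hj1 hj2 => cc_conv N hN j hj1 (by omega)) hdec'
  rw [show h-1+1 = h from by omega] at hkey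
  have hsk : Real.sin ((k:ℝ)*Real.pi) = 0 := by exact_mod_cast Real.sin_nat_mul_pi k
  have hcos0 : Real.cos ((k:ℝ)*Real.pi + Real.pi/2) = 0 := by
    rw [Real.cos_add, Real.cos_pi_div_two, Real.sin_pi_div_two, hsk]; ring
  have hsgh : 0 < Sg (thetaNk N k) h := by
    have hf := sg_formula (thetaNk N k) h
    have hang : ((h:ℝ) + 1/2) * thetaNk N k = (k:ℝ)*Real.pi + Real.pi/2 := by
      rw [thetaNk, hNr]; field_simp
    rw [hang, hcos0] at hf
    nlinarith
  have hch : 0 < cc N h := by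
    simp only [cc]
    have := sin_angle_pos N h (by omega) (by omega) hN
    positivity
  nlinarith [hkey, mul_pos hch hsgh]

set_option maxHeartbeats 1000000 in
lemma part2even (N k h : ℕ) (hN : 3 ≤ N) (hNh : N = h + h) (hk1 : 1 ≤ k)
    (h2k : 2*(k+1) ≤ N) :
    0 < ∑ j ∈ Icc 1 (N-1), cc N j * Real.sin ((j:ℝ) * thetaNk N k) := by
  have hN0 : (0:ℝ) < N := by exact_mod_cast (by omega : 0 < N)
  have hN3 : (3:ℝ) ≤ N := by exact_mod_cast hN
  have hh2 : 2 ≤ h := by omega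
  have hNr : (N:ℝ) = 2*(h:ℝ) := by rw [hNh]; push_cast; ring
  have hhr : (0:ℝ) < h := by exact_mod_cast (by omega : 0 < h)
  have hθ1 : 0 < thetaNk N k := theta_pos N k hN
  have hθ2 : thetaNk N k < Real.pi := theta_lt_pi N k hN (by omega)
  have hsa : 0 < Real.sin (thetaNk N k/2) :=
    Real.sin_pos_of_pos_of_lt_pi (by linarith) (by linarith [Real.pi_pos])
  have hca : 0 < Real.cos (thetaNk N k/2) :=
    Real.cos_pos_of_mem_Ioo ⟨by linarith [Real.pi_pos], by linarith⟩
  rw [fold_even N h _ hh2 hNh (fun j hj1 hj2 => cc_sym_term N k j hN hj1 hj2)]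
  have hdec' : cc N ((h-2)+1) ≤ cc N (h-2) ∨ h - 2 = 0 := by
    rcases Nat.lt_or_ge h 3 with h3 | h3
    · exact Or.inr (by omega)
    · exact Or.inl (cc_dec N hN (h-2) (by omega) (by omega))
  have hkey := key_lower (thetaNk N k) hθ1 hθ2 (cc N) (h-2)
    (fun j hj1 hj2 => cc_conv N hN j hj1 (by omega)) hdec'
  rw [show h-2+1 = h-1 from by omega] at hkey
  -- special values
  have hsk : Real.sin ((k:ℝ)*Real.pi) = 0 := by exact_mod_cast Real.sin_nat_mul_pi k
  have hcos0 : Real.cos ((k:ℝ)*Real.pi + Real.pi/2) = 0 := by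
    rw [Real.cos_add, Real.cos_pi_div_two, Real.sin_pi_div_two, hsk]; ring
  have hsin0 : Real.sin ((k:ℝ)*Real.pi + Real.pi/2) = Real.cos ((k:ℝ)*Real.pi) := by
    rw [Real.sin_add, Real.cos_pi_div_two, Real.sin_pi_div_two, hsk]; ring
  have hhcast : ((h-1:ℕ):ℝ) = (h:ℝ) - 1 := by
    push_cast [Nat.cast_sub (by omega : 1 ≤ h)]; ring
  have hang2 : (h:ℝ) * thetaNk N k = (k:ℝ)*Real.pi + Real.pi/2 := by
    rw [thetaNk, hNr]; field_simp
  have hfh : cc N h * Real.sin ((h:ℝ) * thetaNk N k) = (1/4) * Real.cos ((k:ℝ)*Real.pi) := by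
    have hang1 : Real.pi * (h:ℝ)/N = Real.pi/2 := by
      rw [hNr]; field_simp
    simp only [cc]
    rw [hang1, hang2, hsin0, Real.sin_pi_div_two]
    norm_num
  have hsgf : 2 * Real.sin (thetaNk N k/2) * Sg (thetaNk N k) (h-1)
      = Real.cos (thetaNk N k/2)
        - Real.cos ((k:ℝ)*Real.pi) * Real.sin (thetaNk N k/2) := by
    have hf := sg_formula (thetaNk N k) (h-1)
    rw [hhcast] at hf
    have hang : ((h:ℝ) - 1 + 1/2) * thetaNk N k
        = ((k:ℝ)*Real.pi + Real.pi/2) - thetaNk N k/2 := by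
      rw [thetaNk, hNr]; field_simp; ring
    rw [hang, Real.cos_sub, hcos0, hsin0] at hf
    linarith
  have hch1 : cc N (h-1) = 1/(4 * Real.cos (Real.pi/(N:ℝ))^2) := by
    have hbang : Real.pi * ((h-1:ℕ):ℝ) / N = Real.pi/2 - Real.pi/N := by
      rw [hhcast, hNr]; field_simp
    simp only [cc]
    rw [hbang, Real.sin_pi_div_two_sub]
  have hspN : 0 < Real.sin (Real.pi/(N:ℝ)) := by
    apply Real.sin_pos_of_pos_of_lt_pi (by positivity)
    rw [div_lt_iff₀ hN0]
    nlinarith [Real.pi_pos]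
  have hcpN : 0 < Real.cos (Real.pi/(N:ℝ)) := by
    apply Real.cos_pos_of_mem_Ioo
    constructor
    · have hd : 0 < Real.pi/(N:ℝ) := by positivity
      linarith [Real.pi_pos]
    · rw [div_lt_iff₀ hN0]
      nlinarith [Real.pi_pos]
  have hfinal : 0 < 2 * (cc N (h-1) * Sg (thetaNk N k) (h-1))
      + cc N h * Real.sin ((h:ℝ) * thetaNk N k) := by
    rw [hfh]
    rcases Nat.even_or_odd k with ⟨t, hkt⟩ | ⟨t, hkt⟩
    · -- k even : delicate case
      have hε : Real.cos ((k:ℝ)*Real.pi) = 1 := by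
        have := cos_nat_pi_even t
        rw [← hkt] at this
        exact_mod_cast this
      rw [hε] at hsgf ⊢
      have hSgval : Sg (thetaNk N k) (h-1)
          = (Real.cos (thetaNk N k/2) - Real.sin (thetaNk N k/2))
            /(2*Real.sin (thetaNk N k/2)) := by
        rw [eq_div_iff (by linarith : (0:ℝ) < 2*Real.sin (thetaNk N k/2)).ne']
        linarith
      have hG := G_pos N k hN (by omega) hk1 (by omega) h2k
      rw [hSgval, hch1]
      have hGoalEq : 2*(1/(4 * Real.cos (Real.pi/(N:ℝ))^2)
            * ((Real.cos (thetaNk N k/2) - Real.sin (thetaNk N k/2))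
              /(2*Real.sin (thetaNk N k/2)))) + 1/4 * 1
          = (Real.cos (thetaNk N k/2)
              - Real.sin (thetaNk N k/2) * (1 - Real.cos (Real.pi/(N:ℝ))^2))
            /(4*Real.sin (thetaNk N k/2)*Real.cos (Real.pi/(N:ℝ))^2) := by
        field_simp
        ring
      rw [hGoalEq]
      exact div_pos hG (by positivity)
    · -- k odd
      have hε : Real.cos ((k:ℝ)*Real.pi) = -1 := by
        have := cos_nat_pi_odd t
        rw [← hkt] at this
        exact_mod_cast this
      rw [hε] at hsgf ⊢
      have hSgval : Sg (thetaNk N k) (h-1)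
          = (Real.cos (thetaNk N k/2) + Real.sin (thetaNk N k/2))
            /(2*Real.sin (thetaNk N k/2)) := by
        rw [eq_div_iff (by linarith : (0:ℝ) < 2*Real.sin (thetaNk N k/2)).ne']
        linarith
      rw [hSgval, hch1]
      have hcp1 : Real.cos (Real.pi/(N:ℝ))^2 < 1 := by
        nlinarith [Real.sin_sq_add_cos_sq (Real.pi/(N:ℝ)), hspN]
      have hGoalEq : 2*(1/(4 * Real.cos (Real.pi/(N:ℝ))^2)
            * ((Real.cos (thetaNk N k/2) + Real.sin (thetaNk N k/2))
              /(2*Real.sin (thetaNk N k/2)))) + 1/4 * (-1)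
          = (Real.cos (thetaNk N k/2)
              + Real.sin (thetaNk N k/2) * (1 - Real.cos (Real.pi/(N:ℝ))^2))
            /(4*Real.sin (thetaNk N k/2)*Real.cos (Real.pi/(N:ℝ))^2) := by
        field_simp
        ring
      rw [hGoalEq]
      apply div_pos _ (by positivity)
      nlinarith [hca, hsa, hcp1]
  linarith [hkey, hfinal]
set_option maxHeartbeats 1000000 in
/-- For `N ≥ 3`, the half sequence `(λ_k)_{1 ≤ k ≤ ⌊N/2⌋}` of vertical eigenvalues of the
regular N-gon, `λ_k = -∑_{j=1}^{N-1} (1 - cos(2πjk/N))/(2 sin(πj/N))^3`, is negative and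
strictly decreasing. -/
theorem ngon_eigenvalues_neg_decreasing (N : ℕ) (hN : 3 ≤ N) :
    (∀ k : ℕ, 1 ≤ k → k ≤ N / 2 →
      (-∑ j ∈ Finset.Icc 1 (N - 1),
          (1 - Real.cos (2 * Real.pi * j * k / N)) / (2 * Real.sin (Real.pi * j / N)) ^ 3) < 0) ∧
    (∀ k : ℕ, 1 ≤ k → k + 1 ≤ N / 2 →
      (-∑ j ∈ Finset.Icc 1 (N - 1),
          (1 - Real.cos (2 * Real.pi * j * (k + 1) / N)) / (2 * Real.sin (Real.pi * j / N)) ^ 3)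
        < (-∑ j ∈ Finset.Icc 1 (N - 1),
            (1 - Real.cos (2 * Real.pi * j * k / N)) / (2 * Real.sin (Real.pi * j / N)) ^ 3)) := by
  have hN0 : (0:ℝ) < N := by exact_mod_cast (by omega : 0 < N)
  constructor
  · -- Part 1: negativity
    intro k hk1 hk2
    rw [neg_lt_zero]
    have h2k : 2*k ≤ N := by omega
    apply Finset.sum_pos'
    · intro j hj
      simp only [Finset.mem_Icc] at hj
      apply div_nonneg
      · nlinarith [Real.cos_le_one (2 * Real.pi * j * k / N)]
      · have := sin_angle_pos N j hj.1 hj.2 hN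
        positivity
    · refine ⟨1, Finset.mem_Icc.mpr ⟨le_refl 1, by omega⟩, ?_⟩
      apply div_pos
      · have hang : 2 * Real.pi * ((1:ℕ):ℝ) * k / N = 2 * (Real.pi * k / N) := by
          push_cast; ring
        rw [hang]
        have h1 : 0 < Real.pi * k / N := by
          apply div_pos _ hN0
          have : (0:ℝ) < k := by exact_mod_cast hk1
          positivity
        have h2 : Real.pi * k / N < Real.pi := by
          rw [div_lt_iff₀ hN0]
          have hkN : (k:ℝ) < N := by exact_mod_cast (by omega : k < N)
          nlinarith [Real.pi_pos]
        have := cos_lt_one_of (2*(Real.pi * k / N)) (by linarith) (by linarith)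
        linarith
      · have := sin_angle_pos N 1 le_rfl (by omega) hN
        positivity
  · -- Part 2: strictly decreasing
    intro k hk1 hk2
    have h2k : 2*(k+1) ≤ N := by omega
    rw [neg_lt_neg_iff, ← sub_pos, ← Finset.sum_sub_distrib]
    have hrew : ∑ j ∈ Finset.Icc 1 (N - 1),
        ((1 - Real.cos (2 * Real.pi * j * ((k:ℝ) + 1) / N)) / (2 * Real.sin (Real.pi * j / N)) ^ 3
          - (1 - Real.cos (2 * Real.pi * j * k / N)) / (2 * Real.sin (Real.pi * j / N)) ^ 3)
        = ∑ j ∈ Finset.Icc 1 (N-1), cc N j * Real.sin ((j:ℝ) * thetaNk N k) := by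
      apply Finset.sum_congr rfl
      intro j hj
      simp only [Finset.mem_Icc] at hj
      have hs : 0 < Real.sin (Real.pi * j / N) := sin_angle_pos N j hj.1 hj.2 hN
      have hid : Real.cos (2 * Real.pi * j * k / N) - Real.cos (2 * Real.pi * j * ((k:ℝ) + 1) / N)
          = 2 * Real.sin ((j:ℝ) * thetaNk N k) * Real.sin (Real.pi * j / N) := by
        have h := Real.two_mul_sin_mul_sin ((j:ℝ) * thetaNk N k) (Real.pi * j / N)
        have h1 : (j:ℝ) * thetaNk N k - Real.pi*j/N = 2 * Real.pi * j * k / N := by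
          rw [thetaNk]; field_simp; ring
        have h2 : (j:ℝ) * thetaNk N k + Real.pi*j/N = 2 * Real.pi * j * ((k:ℝ) + 1) / N := by
          rw [thetaNk]; field_simp; ring
        rw [h1, h2] at h
        linarith
      simp only [cc]
      rw [div_sub_div_same]
      have h3 : (1 - Real.cos (2 * Real.pi * j * ((k:ℝ) + 1) / N))
          - (1 - Real.cos (2 * Real.pi * j * k / N))
          = Real.cos (2 * Real.pi * j * k / N) - Real.cos (2 * Real.pi * j * ((k:ℝ) + 1) / N) := by
        ring
      rw [h3, hid]
      field_simp
      ring
    rw [hrew]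
    rcases Nat.even_or_odd N with ⟨h, hNh⟩ | ⟨h, hNh⟩
    · exact part2even N k h hN hNh hk1 h2k
    · exact part2odd N k h hN hNh hk1 h2k
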